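/- Let 0 < μ < 1, c > 0, λ = 1/2 + √(c+1/4), and c(n) = λμ^{2n} − λ²μ^{4n} + c. Define operators on ℓ²(ℕ) by A e_n = λ μ^{2n} e_n and B e_n = c(n)^{1/2} e_{n−1} (with e_{−1} = 0), so B* e_n = c(n+1)^{1/2} e_{n+1}. Then these operators are bounded and satisfy the Podleś sphere relations: A is self-adjoint, A B = μ^{-2} B A, B*B = A − A² + c·I, and B B* = μ² A − μ⁴ A² + c·I. -/

import Mathlib

/-- λ₊ = 1/2 + √(c+1/4) -/
noncomputable def lamP (c : ℝ) : ℝ := 1/2 + Real.sqrt (c + 1/4)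

/-- c₊(n) = λμ^{2n} − (λμ^{2n})² + c -/
noncomputable def cP (c μ : ℝ) (n : ℕ) : ℝ := lamP c * μ ^ (2 * n) - (lamP c * μ ^ (2 * n)) ^ 2 + c

open scoped ENNReal

section Aux

local notation "⟪" x ", " y "⟫" => @inner ℂ _ _ x y

lemma lamP_pos (c : ℝ) : 0 < lamP c := by
  have := Real.sqrt_nonneg (c + 1/4)
  unfold lamP; linarith

lemma lamP_sq {c : ℝ} (hc : 0 ≤ c) : lamP c ^ 2 = lamP c + c := by
  have hs : Real.sqrt (c + 1/4) ^ 2 = c + 1/4 := Real.sq_sqrt (by linarith)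
  unfold lamP; nlinarith [hs]

lemma cP_nonneg {c μ : ℝ} (hc : 0 ≤ c) (hμ0 : 0 < μ) (hμ1 : μ < 1) (n : ℕ) :
    0 ≤ cP c μ n := by
  set t := μ ^ (2 * n) with ht
  have ht0 : 0 < t := pow_pos hμ0 _
  have ht1 : t ≤ 1 := pow_le_one₀ hμ0.le hμ1.le
  have hl := lamP_pos c
  have hsq := lamP_sq hc
  unfold cP
  nlinarith [mul_nonneg (mul_nonneg hl.le ht0.le) (sub_nonneg.2 ht1),
    mul_nonneg hc (sub_nonneg.2 (mul_le_one₀ ht1 ht0.le ht1))]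

lemma cP_le {c μ : ℝ} (hc : 0 ≤ c) (hμ0 : 0 < μ) (hμ1 : μ < 1) (n : ℕ) :
    cP c μ n ≤ lamP c ^ 2 := by
  set t := μ ^ (2 * n) with ht
  have ht0 : 0 < t := pow_pos hμ0 _
  have ht1 : t ≤ 1 := pow_le_one₀ hμ0.le hμ1.le
  have hl := lamP_pos c
  have hsq := lamP_sq hc
  unfold cP
  nlinarith [sq_nonneg (lamP c * t)]

lemma cP_zero {c μ : ℝ} (hc : 0 ≤ c) : cP c μ 0 = 0 := by
  have hsq := lamP_sq hc
  simp only [cP, Nat.mul_zero, pow_zero, mul_one]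
  linarith

variable {H : Type*} [NormedAddCommGroup H] [InnerProductSpace ℂ H] [CompleteSpace H]

/-- Membership lemma for the weighted composition operator on ℓ². -/
lemma memAux {w : ℕ → ℂ} {f : ℕ → ℕ} (hf : Function.Injective f)
    {C : ℝ} (hw : ∀ n, ‖w n‖ ≤ C) (x : lp (fun _ : ℕ => ℂ) 2) :
    Memℓp (fun n => w n * x (f n)) 2 := by
  have h2 : (0:ℝ) < (2 : ℝ≥0∞).toReal := by norm_num
  apply memℓp_gen
  have hsum : Summable ((fun k => ‖x k‖ ^ (2 : ℝ≥0∞).toReal) ∘ f) :=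
    ((lp.memℓp x).summable h2).comp_injective hf
  have hC : 0 ≤ C := le_trans (norm_nonneg _) (hw 0)
  refine Summable.of_nonneg_of_le (fun n => Real.rpow_nonneg (norm_nonneg _) _)
    (fun n => ?_) (hsum.mul_left (C ^ (2 : ℝ≥0∞).toReal))
  have h1 : ‖w n * x (f n)‖ ≤ C * ‖x (f n)‖ := by
    rw [norm_mul]; exact mul_le_mul_of_nonneg_right (hw n) (norm_nonneg _)
  calc ‖w n * x (f n)‖ ^ (2 : ℝ≥0∞).toReal
      ≤ (C * ‖x (f n)‖) ^ (2 : ℝ≥0∞).toReal :=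
        Real.rpow_le_rpow (norm_nonneg _) h1 h2.le
    _ = C ^ (2 : ℝ≥0∞).toReal * ‖x (f n)‖ ^ (2 : ℝ≥0∞).toReal :=
        Real.mul_rpow hC (norm_nonneg _)

/-- Underlying function of the weighted composition operator. -/
noncomputable def wcFun (w : ℕ → ℂ) (f : ℕ → ℕ) (hf : Function.Injective f)
    (C : ℝ) (hw : ∀ n, ‖w n‖ ≤ C) (x : lp (fun _ : ℕ => ℂ) 2) : lp (fun _ : ℕ => ℂ) 2 :=
  ⟨fun n => w n * x (f n), memAux hf hw x⟩

lemma wcFun_apply (w : ℕ → ℂ) (f : ℕ → ℕ) (hf : Function.Injective f)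
    (C : ℝ) (hw : ∀ n, ‖w n‖ ≤ C) (x : lp (fun _ : ℕ => ℂ) 2) (n : ℕ) :
    (wcFun w f hf C hw x : ∀ _ : ℕ, ℂ) n = w n * x (f n) := rfl

/-- Weighted composition operator on ℓ²: `(T x) n = w n * x (f n)`. -/
noncomputable def wcL (w : ℕ → ℂ) (f : ℕ → ℕ) (hf : Function.Injective f)
    (C : ℝ) (hw : ∀ n, ‖w n‖ ≤ C) : lp (fun _ : ℕ => ℂ) 2 →L[ℂ] lp (fun _ : ℕ => ℂ) 2 :=
  LinearMap.mkContinuous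
    { toFun := wcFun w f hf C hw
      map_add' := fun x y => lp.ext (funext fun n => by
        rw [lp.coeFn_add, Pi.add_apply, wcFun_apply, wcFun_apply, wcFun_apply,
          lp.coeFn_add, Pi.add_apply, mul_add])
      map_smul' := fun a x => lp.ext (funext fun n => by
        simp only [RingHom.id_apply]
        rw [lp.coeFn_smul, Pi.smul_apply, wcFun_apply, wcFun_apply,
          lp.coeFn_smul, Pi.smul_apply, smul_eq_mul, smul_eq_mul]
        ring) }
    C
    (fun x => by
      have hC : 0 ≤ C := le_trans (norm_nonneg _) (hw 0)
      have h2 : (0:ℝ) < (2 : ℝ≥0∞).toReal := by norm_num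
      set y : lp (fun _ : ℕ => ℂ) 2 := wcFun w f hf C hw x with hy
      show ‖y‖ ≤ C * ‖x‖
      rw [← Real.rpow_le_rpow_iff (lp.norm_nonneg' y) (by positivity) h2,
        lp.norm_rpow_eq_tsum h2]
      have hsy : Summable fun n => ‖y n‖ ^ (2 : ℝ≥0∞).toReal :=
        (lp.memℓp y).summable h2
      have hsx : Summable fun k => ‖x k‖ ^ (2 : ℝ≥0∞).toReal :=
        (lp.memℓp x).summable h2
      have hsxf : Summable ((fun k => ‖x k‖ ^ (2 : ℝ≥0∞).toReal) ∘ f) :=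
        hsx.comp_injective hf
      calc (∑' n, ‖y n‖ ^ (2 : ℝ≥0∞).toReal)
          ≤ ∑' n, C ^ (2 : ℝ≥0∞).toReal * ‖x (f n)‖ ^ (2 : ℝ≥0∞).toReal := by
            refine Summable.tsum_le_tsum (fun n => ?_) hsy (hsxf.mul_left _)
            rw [hy, wcFun_apply]
            calc ‖w n * x (f n)‖ ^ (2 : ℝ≥0∞).toReal
                ≤ (C * ‖x (f n)‖) ^ (2 : ℝ≥0∞).toReal := by
                  refine Real.rpow_le_rpow (norm_nonneg _) ?_ h2.le
                  rw [norm_mul]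
                  exact mul_le_mul_of_nonneg_right (hw n) (norm_nonneg _)
              _ = _ := Real.mul_rpow hC (norm_nonneg _)
        _ = C ^ (2 : ℝ≥0∞).toReal * ∑' n, ‖x (f n)‖ ^ (2 : ℝ≥0∞).toReal := tsum_mul_left
        _ ≤ C ^ (2 : ℝ≥0∞).toReal * ∑' k, ‖x k‖ ^ (2 : ℝ≥0∞).toReal := by
            refine mul_le_mul_of_nonneg_left ?_ (Real.rpow_nonneg hC _)
            exact Summable.tsum_le_tsum_of_inj f hf
              (fun k _ => Real.rpow_nonneg (norm_nonneg _) _)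
              (fun n => le_rfl) hsxf hsx
        _ = C ^ (2 : ℝ≥0∞).toReal * ‖x‖ ^ (2 : ℝ≥0∞).toReal := by
            rw [← lp.norm_rpow_eq_tsum h2]
        _ = (C * ‖x‖) ^ (2 : ℝ≥0∞).toReal := (Real.mul_rpow hC (norm_nonneg _)).symm)

lemma wcL_apply (w : ℕ → ℂ) (f : ℕ → ℕ) (hf : Function.Injective f)
    (C : ℝ) (hw : ∀ n, ‖w n‖ ≤ C) (x : lp (fun _ : ℕ => ℂ) 2) (n : ℕ) :
    (wcL w f hf C hw x : ∀ _ : ℕ, ℂ) n = w n * x (f n) := rfl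

/-- The corresponding operator on `H` through a Hilbert basis. -/
noncomputable def wcOp (e : HilbertBasis ℕ ℂ H) (w : ℕ → ℂ) (f : ℕ → ℕ)
    (hf : Function.Injective f) (C : ℝ) (hw : ∀ n, ‖w n‖ ≤ C) : H →L[ℂ] H :=
  ((e.repr.symm.toContinuousLinearEquiv : lp (fun _ : ℕ => ℂ) 2 ≃L[ℂ] H) :
      lp (fun _ : ℕ => ℂ) 2 →L[ℂ] H).comp
    ((wcL w f hf C hw).comp
      ((e.repr.toContinuousLinearEquiv : H ≃L[ℂ] lp (fun _ : ℕ => ℂ) 2) :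
        H →L[ℂ] lp (fun _ : ℕ => ℂ) 2))

lemma wcOp_apply (e : HilbertBasis ℕ ℂ H) (w : ℕ → ℂ) (f : ℕ → ℕ)
    (hf : Function.Injective f) (C : ℝ) (hw : ∀ n, ‖w n‖ ≤ C) (x : H) :
    wcOp e w f hf C hw x = e.repr.symm (wcL w f hf C hw (e.repr x)) := rfl

lemma wcL_single (w : ℕ → ℂ) (f : ℕ → ℕ) (hf : Function.Injective f)
    (C : ℝ) (hw : ∀ n, ‖w n‖ ≤ C) (m k : ℕ) (hk : f k = m) :
    wcL w f hf C hw (lp.single 2 m 1) = w k • lp.single 2 k (1 : ℂ) := by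
  apply lp.ext; funext n
  rw [wcL_apply, lp.coeFn_smul, Pi.smul_apply]
  rcases eq_or_ne n k with rfl | hn
  · subst hk
    rw [lp.single_apply_self, lp.single_apply_self, smul_eq_mul]
  · have h1 : f n ≠ m := fun h => hn (hf (h.trans hk.symm))
    rw [lp.single_apply_ne _ _ _ h1, lp.single_apply_ne _ _ _ hn]
    simp

lemma wcL_single_zero (w : ℕ → ℂ) (f : ℕ → ℕ) (hf : Function.Injective f)
    (C : ℝ) (hw : ∀ n, ‖w n‖ ≤ C) (m : ℕ) (hm : ∀ n, f n ≠ m) :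
    wcL w f hf C hw (lp.single 2 m 1) = 0 := by
  apply lp.ext; funext n
  rw [wcL_apply, lp.single_apply_ne _ _ _ (hm n)]
  simp

lemma wcOp_basis (e : HilbertBasis ℕ ℂ H) (w : ℕ → ℂ) (f : ℕ → ℕ)
    (hf : Function.Injective f) (C : ℝ) (hw : ∀ n, ‖w n‖ ≤ C) (m k : ℕ) (hk : f k = m) :
    wcOp e w f hf C hw (e m) = w k • e k := by
  classical
  rw [wcOp_apply, e.repr_self, wcL_single w f hf C hw m k hk, map_smul,
    ← e.repr_self, LinearIsometryEquiv.symm_apply_apply]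

lemma wcOp_basis_zero (e : HilbertBasis ℕ ℂ H) (w : ℕ → ℂ) (f : ℕ → ℕ)
    (hf : Function.Injective f) (C : ℝ) (hw : ∀ n, ‖w n‖ ≤ C) (m : ℕ) (hm : ∀ n, f n ≠ m) :
    wcOp e w f hf C hw (e m) = 0 := by
  classical
  rw [wcOp_apply, e.repr_self, wcL_single_zero w f hf C hw m hm, map_zero]

lemma hilbert_ext (e : HilbertBasis ℕ ℂ H) {x y : H}
    (h : ∀ m, ⟪e m, x⟫ = ⟪e m, y⟫) : x = y := by
  apply e.repr.injective
  apply lp.ext; funext m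
  show e.repr x m = e.repr y m
  rw [e.repr_apply_apply, e.repr_apply_apply]
  exact h m

end Aux

theorem podles_representation_exists
    {H : Type*} [NormedAddCommGroup H] [InnerProductSpace ℂ H] [CompleteSpace H]
    (e : HilbertBasis ℕ ℂ H) (μ c : ℝ) (hc : 0 < c) (hμ0 : 0 < μ) (hμ1 : μ < 1) :
    ∃ A B : H →L[ℂ] H,
      (∀ n : ℕ, A (e n) = ((lamP c * μ ^ (2 * n) : ℝ) : ℂ) • e n) ∧
      B (e 0) = 0 ∧
      (∀ n : ℕ, B (e (n + 1)) = ((Real.sqrt (cP c μ (n + 1)) : ℝ) : ℂ) • e n) ∧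
      (∀ n : ℕ, (ContinuousLinearMap.adjoint B) (e n)
          = ((Real.sqrt (cP c μ (n + 1)) : ℝ) : ℂ) • e (n + 1)) ∧
      IsSelfAdjoint A ∧
      A ∘L B = ((μ : ℂ) ^ 2)⁻¹ • (B ∘L A) ∧
      (ContinuousLinearMap.adjoint B) ∘L B = A - A ∘L A + (c : ℂ) • 1 ∧
      B ∘L (ContinuousLinearMap.adjoint B)
        = (μ : ℂ) ^ 2 • A - (μ : ℂ) ^ 4 • (A ∘L A) + (c : ℂ) • 1 := by
  classical
  have hl := lamP_pos c
  -- the weights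
  set aw : ℕ → ℂ := fun n => ((lamP c * μ ^ (2 * n) : ℝ) : ℂ) with haw
  set bw : ℕ → ℂ := fun n => ((Real.sqrt (cP c μ (n + 1)) : ℝ) : ℂ) with hbw
  have hawb : ∀ n, ‖aw n‖ ≤ lamP c := by
    intro n
    have ht0 : 0 < μ ^ (2 * n) := pow_pos hμ0 _
    have ht1 : μ ^ (2 * n) ≤ 1 := pow_le_one₀ hμ0.le hμ1.le
    rw [haw]
    simp only [Complex.norm_real, Real.norm_eq_abs,
      abs_of_nonneg (by positivity : (0:ℝ) ≤ lamP c * μ ^ (2 * n))]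
    nlinarith
  have hbwb : ∀ n, ‖bw n‖ ≤ lamP c := by
    intro n
    rw [hbw]
    simp only [Complex.norm_real, Real.norm_eq_abs, abs_of_nonneg (Real.sqrt_nonneg _)]
    calc Real.sqrt (cP c μ (n + 1)) ≤ Real.sqrt (lamP c ^ 2) :=
          Real.sqrt_le_sqrt (cP_le hc.le hμ0 hμ1 _)
      _ = lamP c := Real.sqrt_sq hl.le
  set A : H →L[ℂ] H := wcOp e aw id Function.injective_id (lamP c) hawb with hA
  set B : H →L[ℂ] H := wcOp e bw Nat.succ Nat.succ_injective (lamP c) hbwb with hB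
  have hAe : ∀ n, A (e n) = aw n • e n := fun n =>
    wcOp_basis e aw id Function.injective_id (lamP c) hawb n n rfl
  have hB0 : B (e 0) = 0 :=
    wcOp_basis_zero e bw Nat.succ Nat.succ_injective (lamP c) hbwb 0
      (fun n => Nat.succ_ne_zero n)
  have hBe : ∀ n, B (e (n + 1)) = bw n • e n := fun n =>
    wcOp_basis e bw Nat.succ Nat.succ_injective (lamP c) hbwb (n + 1) n rfl
  have horth : ∀ i j : ℕ, (inner ℂ (e i) (e j) : ℂ) = if i = j then 1 else 0 :=
    fun i j => orthonormal_iff_ite.mp e.orthonormal i j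
  -- adjoint of B on basis vectors
  have hBadj : ∀ n, (ContinuousLinearMap.adjoint B) (e n) = bw n • e (n + 1) := by
    intro n
    apply hilbert_ext e
    intro m
    rw [ContinuousLinearMap.adjoint_inner_right, inner_smul_right]
    cases m with
    | zero =>
      rw [hB0, inner_zero_left, horth]
      simp
    | succ k =>
      rw [hBe k, inner_smul_left, horth, horth]
      simp only [hbw, Complex.conj_ofReal, add_left_inj]
      by_cases hkn : k = n
      · subst hkn; simp
      · simp [hkn]
  -- self-adjointness of A
  have hdense : Dense ((Submodule.span ℂ (Set.range (⇑e)) : Submodule ℂ H) : Set H) := by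
    rw [dense_iff_closure_eq, ← Submodule.topologicalClosure_coe, e.dense_span,
      Submodule.top_coe]
  have hAsa : IsSelfAdjoint A := by
    rw [ContinuousLinearMap.isSelfAdjoint_iff']
    refine ContinuousLinearMap.ext_on hdense ?_
    rintro x ⟨n, rfl⟩
    apply hilbert_ext e
    intro m
    rw [ContinuousLinearMap.adjoint_inner_right, hAe m, hAe n, inner_smul_left,
      inner_smul_right, horth]
    simp only [haw, Complex.conj_ofReal]
    by_cases hmn : m = n
    · subst hmn; rfl
    · simp [hmn]
  -- key scalar facts
  have hawsucc : ∀ n : ℕ, aw (n + 1) = (μ : ℂ) ^ 2 * aw n := by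
    intro n
    simp only [haw]
    push_cast
    ring
  have hbwsq : ∀ n : ℕ, bw n * bw n = ((cP c μ (n + 1) : ℝ) : ℂ) := by
    intro n
    simp only [hbw]
    rw [← Complex.ofReal_mul, Real.mul_self_sqrt (cP_nonneg hc.le hμ0 hμ1 _)]
  refine ⟨A, B, hAe, hB0, hBe, hBadj, hAsa, ?_, ?_, ?_⟩
  · -- A B = μ⁻² B A
    refine ContinuousLinearMap.ext_on hdense ?_
    rintro x ⟨n, rfl⟩
    simp only [ContinuousLinearMap.comp_apply, ContinuousLinearMap.smul_apply]
    cases n with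
    | zero =>
      rw [hB0, map_zero, hAe 0, map_smul, hB0]
      simp
    | succ k =>
      rw [hBe k, map_smul, hAe k, hAe (k + 1), map_smul, hBe k, hawsucc k]
      simp only [smul_smul]
      congr 1
      have hμne : (μ : ℂ) ^ 2 ≠ 0 :=
        pow_ne_zero 2 (by exact_mod_cast ne_of_gt hμ0)
      have hμne' : (μ : ℂ) ≠ 0 := by exact_mod_cast ne_of_gt hμ0
      field_simp
  · -- B* B = A - A² + c
    refine ContinuousLinearMap.ext_on hdense ?_
    rintro x ⟨n, rfl⟩
    simp only [ContinuousLinearMap.comp_apply, ContinuousLinearMap.add_apply,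
      ContinuousLinearMap.sub_apply, ContinuousLinearMap.smul_apply,
      ContinuousLinearMap.one_apply]
    cases n with
    | zero =>
      rw [hB0, map_zero, hAe 0, map_smul, hAe 0]
      simp only [smul_smul]
      rw [← sub_smul, ← add_smul]
      have h0 : aw 0 - aw 0 * aw 0 + (c : ℂ) = ((cP c μ 0 : ℝ) : ℂ) := by
        simp only [haw, cP]
        push_cast
        ring
      rw [h0, cP_zero hc.le]
      simp
    | succ k =>
      rw [hBe k, map_smul, hBadj k, hAe (k + 1), map_smul, hAe (k + 1)]
      simp only [smul_smul]
      rw [← sub_smul, ← add_smul]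
      congr 1
      rw [hbwsq k]
      simp only [haw, cP]
      push_cast
      ring
  · -- B B* = μ² A - μ⁴ A² + c
    refine ContinuousLinearMap.ext_on hdense ?_
    rintro x ⟨n, rfl⟩
    simp only [ContinuousLinearMap.comp_apply, ContinuousLinearMap.add_apply,
      ContinuousLinearMap.sub_apply, ContinuousLinearMap.smul_apply,
      ContinuousLinearMap.one_apply]
    rw [hBadj n, map_smul, hBe n, hAe n, map_smul, hAe n]
    simp only [smul_smul]
    rw [← sub_smul, ← add_smul]
    congr 1
    rw [hbwsq n]
    simp only [haw, cP]
    push_cast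
    ring
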